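/- Any regular language of interval ipomsets has finite width: if L = L(H) for a finite higher-dimensional automaton H, then sup{wid(P) : P ∈ L} is finite (bounded by the dimension of H). -/

import Mathlib

set_option autoImplicit false

/-! ## Ipomsets (pomsets with interfaces) over an alphabet Λ, with events drawn from ℕ -/

structure Ipomset (Λ : Type) : Type where
  E : Finset ℕ
  lt : ℕ → ℕ → Prop
  evord : ℕ → ℕ → Prop
  S : Finset ℕ
  T : Finset ℕ
  lab : ℕ → Λ
  S_sub : S ⊆ E
  T_sub : T ⊆ E
  lt_dom : ∀ a b, lt a b → a ∈ E ∧ b ∈ E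
  evord_dom : ∀ a b, evord a b → a ∈ E ∧ b ∈ E
  lt_irrefl : ∀ e, ¬ lt e e
  lt_trans : ∀ a b c, lt a b → lt b c → lt a c
  evord_irrefl : ∀ e, ¬ evord e e
  evord_asymm : ∀ a b, evord a b → ¬ evord b a
  lt_evord : ∀ a b, lt a b → ¬ evord a b ∧ ¬ evord b a
  total : ∀ e ∈ E, ∀ e' ∈ E, e ≠ e' → lt e e' ∨ lt e' e ∨ evord e e' ∨ evord e' e
  S_min : ∀ e ∈ S, ∀ e', ¬ lt e' e
  T_max : ∀ e ∈ T, ∀ e', ¬ lt e e'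

namespace Ipomset

variable {Λ : Type}

/-- An ipomset is interval if its precedence order admits an interval representation. -/
def Interval (P : Ipomset Λ) : Prop :=
  ∃ f g : ℕ → ℝ, (∀ e ∈ P.E, f e ≤ g e) ∧
    (∀ e₁ ∈ P.E, ∀ e₂ ∈ P.E, (P.lt e₁ e₂ ↔ g e₁ < f e₂))

/-- Discrete: empty precedence order. -/
def Discrete (P : Ipomset Λ) : Prop := ∀ a b, ¬ P.lt a b

/-- A starter is a discrete ipomset all of whose events are targets. -/
def IsStarter (P : Ipomset Λ) : Prop := P.Discrete ∧ P.T = P.E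

/-- A terminator is a discrete ipomset all of whose events are sources. -/
def IsTerminator (P : Ipomset Λ) : Prop := P.Discrete ∧ P.S = P.E

/-- An identity is both a starter and a terminator. -/
def IsId (P : Ipomset Λ) : Prop := P.IsStarter ∧ P.IsTerminator

/-- The width of an ipomset: the cardinality of a largest `<`-antichain. -/
noncomputable def width (P : Ipomset Λ) : ℕ :=
  sSup {n | ∃ A : Finset ℕ, A ⊆ P.E ∧ (∀ a ∈ A, ∀ b ∈ A, ¬ P.lt a b) ∧ A.card = n}

/-- `P.Subsumes Q` means `P ⊑ Q` : `Q` subsumes `P`. -/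
def Subsumes (P Q : Ipomset Λ) : Prop :=
  ∃ f : ℕ → ℕ, Set.BijOn f ↑P.E ↑Q.E ∧
    (∀ e ∈ P.E, (e ∈ P.S ↔ f e ∈ Q.S)) ∧
    (∀ e ∈ P.E, (e ∈ P.T ↔ f e ∈ Q.T)) ∧
    (∀ e ∈ P.E, Q.lab (f e) = P.lab e) ∧
    (∀ e₁ ∈ P.E, ∀ e₂ ∈ P.E, Q.lt (f e₁) (f e₂) → P.lt e₁ e₂) ∧
    (∀ e₁ ∈ P.E, ∀ e₂ ∈ P.E, P.evord e₁ e₂ → Q.evord (f e₁) (f e₂))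

/-- `f` is an isomorphism of ipomsets from `P` to `Q`. -/
def IsIso (P Q : Ipomset Λ) (f : ℕ → ℕ) : Prop :=
  Set.BijOn f ↑P.E ↑Q.E ∧
    (∀ e ∈ P.E, (e ∈ P.S ↔ f e ∈ Q.S)) ∧
    (∀ e ∈ P.E, (e ∈ P.T ↔ f e ∈ Q.T)) ∧
    (∀ e ∈ P.E, Q.lab (f e) = P.lab e) ∧
    (∀ e₁ ∈ P.E, ∀ e₂ ∈ P.E, (P.lt e₁ e₂ ↔ Q.lt (f e₁) (f e₂))) ∧
    (∀ e₁ ∈ P.E, ∀ e₂ ∈ P.E, (P.evord e₁ e₂ ↔ Q.evord (f e₁) (f e₂)))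

def Isomorphic (P Q : Ipomset Λ) : Prop := ∃ f, IsIso P Q f

end Ipomset

/-- Subsumption closure of a set of ipomsets. -/
def downc {Λ : Type} (L : Set (Ipomset Λ)) : Set (Ipomset Λ) :=
  {P | ∃ Q ∈ L, P.Subsumes Q}

/-! ## Gluing composition -/

/-- The base relation whose transitive closure is the precedence of a gluing `P * Q`. -/
def glueBase {Λ : Type} (P Q : Ipomset Λ) : ℕ → ℕ → Prop := fun a b =>
  P.lt a b ∨ Q.lt a b ∨ (a ∈ P.E ∧ a ∉ P.T ∧ b ∈ Q.E ∧ b ∉ Q.S)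

/-- `IsGluing P Q R` : the gluing `P * Q` is defined and equals `R`
(events of the target interface of `P` are literally identified with those of the
source interface of `Q`). -/
structure IsGluing {Λ : Type} (P Q R : Ipomset Λ) : Prop where
  match_TS : P.T = Q.S
  inter : ∀ e, e ∈ P.E → e ∈ Q.E → e ∈ P.T
  evord_agree : ∀ a ∈ P.T, ∀ b ∈ P.T, (P.evord a b ↔ Q.evord a b)
  lab_agree : ∀ e ∈ P.T, P.lab e = Q.lab e
  E_eq : R.E = P.E ∪ Q.E
  S_eq : R.S = P.S
  T_eq : R.T = Q.T
  lab_P : ∀ e ∈ P.E, R.lab e = P.lab e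
  lab_Q : ∀ e ∈ Q.E, R.lab e = Q.lab e
  evord_eq : ∀ a b, (R.evord a b ↔ P.evord a b ∨ Q.evord a b)
  lt_eq : ∀ a b, (R.lt a b ↔ Relation.TransGen (glueBase P Q) a b)

/-- `IsGluingList [P₁, …, Pₙ] P` : the iterated gluing `P₁ * ⋯ * Pₙ` is defined and equals `P`. -/
inductive IsGluingList {Λ : Type} : List (Ipomset Λ) → Ipomset Λ → Prop
  | single (P : Ipomset Λ) : IsGluingList [P] P
  | cons {P Q R : Ipomset Λ} {l : List (Ipomset Λ)} :
      IsGluingList l Q → IsGluing P Q R → IsGluingList (P :: l) R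

/-! ## Step decompositions -/

/-- A step decomposition of `P`: a presentation of `P` as a gluing of starters and
terminators. -/
def IsStepDecomp {Λ : Type} (l : List (Ipomset Λ)) (P : Ipomset Λ) : Prop :=
  l ≠ [] ∧ (∀ Q ∈ l, Q.IsStarter ∨ Q.IsTerminator) ∧ IsGluingList l P

/-- Starters and terminators alternate along the list. -/
def Alternating {Λ : Type} (l : List (Ipomset Λ)) : Prop :=
  List.Chain'
    (fun A B => ¬(A.IsStarter ∧ B.IsStarter) ∧ ¬(A.IsTerminator ∧ B.IsTerminator)) l

def IsSparseDecomp {Λ : Type} (l : List (Ipomset Λ)) (P : Ipomset Λ) : Prop :=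
  IsStepDecomp l P ∧ Alternating l

/-! ## Discrete steps as letters (for words over Ω) -/

/-- A letter denoting a starter (`isUp = true`) or terminator (`isUp = false`) with
conclist `U` (a list of labels, in event order) which starts/terminates the events at
the positions in `A`. -/
structure StepLetter (Λ : Type) : Type where
  U : List Λ
  A : Finset ℕ
  isUp : Bool

/-- The letter is well-formed (the started/terminated events are positions of `U`). -/
def ValidLetter {Λ : Type} (s : StepLetter Λ) : Prop := ∀ a ∈ s.A, a < s.U.length

/-- The letter is a well-formed element of `Ω_{≤ k}`. -/
def ValidLetterLe {Λ : Type} (k : ℕ) (s : StepLetter Λ) : Prop :=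
  ValidLetter s ∧ s.U.length ≤ k

/-- `g` enumerates the set `V` of events of `P` as the conclist `U` (in event order,
with matching labels). -/
def ConclistOf {Λ : Type} (P : Ipomset Λ) (V : Set ℕ) (U : List Λ) (g : ℕ → ℕ) : Prop :=
  Set.BijOn g (Set.Iio U.length) V ∧
    (∀ i : Fin U.length, P.lab (g i.1) = U.get i) ∧
    (∀ i j : ℕ, i < j → j < U.length → P.evord (g i) (g j))

/-- The discrete ipomset `D` realises the letter `s`. -/
def LetterMatches {Λ : Type} (s : StepLetter Λ) (D : Ipomset Λ) : Prop :=
  (if s.isUp then D.IsStarter else D.IsTerminator) ∧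
  ∃ g : ℕ → ℕ, ConclistOf D ↑D.E s.U g ∧
    ∀ i < s.U.length, (i ∈ s.A ↔ g i ∉ (if s.isUp then D.S else D.T))

/-- The word `w` of letters glues to the ipomset `P`. -/
def WordMatches {Λ : Type} (w : List (StepLetter Λ)) (P : Ipomset Λ) : Prop :=
  ∃ l : List (Ipomset Λ), List.Forall₂ LetterMatches w l ∧ IsGluingList l P

/-! ## Higher-dimensional automata -/

/-- Remove from the list `U` the entries at positions in `A`. -/
def removeIdx {Λ : Type} (U : List Λ) (A : Finset ℕ) : List Λ :=
  (List.range U.length).filterMap (fun i => if i ∈ A then none else U[i]?)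

/-- Positions of the elements of `A` after the elements at positions in `B` are removed. -/
def reindex (B A : Finset ℕ) : Finset ℕ :=
  A.image (fun a => a - (B.filter (· < a)).card)

/-- A higher-dimensional automaton: a finite precubical set (cells with conclists of
active events and lower/upper face maps, `face false` = δ⁰ and `face true` = δ¹)
with start and accept cells. -/
structure HDA (Λ : Type) : Type 1 where
  Cell : Type
  fin : Fintype Cell
  ev : Cell → List Λ
  face : Bool → Finset ℕ → Cell → Cell
  face_ev : ∀ ν A q, (∀ a ∈ A, a < (ev q).length) →
      ev (face ν A q) = removeIdx (ev q) A
  face_comm : ∀ ν μ A B q, (∀ a ∈ A, a < (ev q).length) → (∀ b ∈ B, b < (ev q).length) →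
      Disjoint A B →
      face ν (reindex B A) (face μ B q) = face μ (reindex A B) (face ν A q)
  start : Set Cell
  accept : Set Cell

namespace HDA

variable {Λ : Type}

/-- Paths in an HDA, together with the word of starter/terminator letters they induce
(a single cell contributes its identity letter; an upstep from `δ⁰_A(q)` to `q`
contributes the starter on `ev q` starting `A`; a downstep from `q` to `δ¹_A(q)`
contributes the terminator on `ev q` terminating `A`). -/
inductive Path (H : HDA Λ) : H.Cell → H.Cell → List (StepLetter Λ) → Prop
  | nil (q : H.Cell) : Path H q q [⟨H.ev q, ∅, true⟩]
  | up {p : H.Cell} {w : List (StepLetter Λ)} (r : H.Cell) (A : Finset ℕ)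
      (hA : ∀ a ∈ A, a < (H.ev r).length) :
      Path H r p w → Path H (H.face false A r) p (⟨H.ev r, A, true⟩ :: w)
  | down {p : H.Cell} {w : List (StepLetter Λ)} (q : H.Cell) (A : Finset ℕ)
      (hA : ∀ a ∈ A, a < (H.ev q).length) :
      Path H (H.face true A q) p w → Path H q p (⟨H.ev q, A, false⟩ :: w)

/-- The language of an HDA: all ipomsets arising as gluings of the words of letters of
accepting paths. -/
def Lang (H : HDA Λ) : Set (Ipomset Λ) :=
  {P | ∃ q p w, q ∈ H.start ∧ p ∈ H.accept ∧ Path H q p w ∧ WordMatches w P}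

/-- The dimension of an HDA. -/
noncomputable def dim (H : HDA Λ) : ℕ :=
  letI := H.fin
  Finset.univ.sup (fun q => (H.ev q).length)

/-- An upstep of an HDA: `(δ⁰_A(q), ↗A, q)`. -/
structure UpStep (H : HDA Λ) : Type where
  cell : H.Cell
  A : Finset ℕ
  valid : ∀ a ∈ A, a < (H.ev cell).length

def UpStep.src {H : HDA Λ} (u : H.UpStep) : H.Cell := H.face false u.A u.cell
def UpStep.tgt {H : HDA Λ} (u : H.UpStep) : H.Cell := u.cell

/-- A downstep of an HDA: `(q, ↘A, δ¹_A(q))`. -/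
structure DownStep (H : HDA Λ) : Type where
  cell : H.Cell
  A : Finset ℕ
  valid : ∀ a ∈ A, a < (H.ev cell).length

def DownStep.src {H : HDA Λ} (d : H.DownStep) : H.Cell := d.cell
def DownStep.tgt {H : HDA Λ} (d : H.DownStep) : H.Cell := H.face true d.A d.cell

end HDA

/-- A set of ipomsets is regular if it is the language of a finite HDA. -/
def Regular {Λ : Type} (L : Set (Ipomset Λ)) : Prop := ∃ H : HDA Λ, HDA.Lang H = L

/-! ## Rational languages -/

/-- Rational languages: generated from ∅, {id_∅} and discrete ipomsets by union,
gluing composition and Kleene plus, each operation followed by closure under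
subsumption. -/
inductive Rational {Λ : Type} : Set (Ipomset Λ) → Prop
  | empty : Rational ∅
  | emptyId : Rational {P : Ipomset Λ | P.E = ∅}
  | single (D : Ipomset Λ) (hD : D.Discrete) :
      Rational (downc {P | Ipomset.Isomorphic P D})
  | union {L₁ L₂ : Set (Ipomset Λ)} : Rational L₁ → Rational L₂ →
      Rational (downc (L₁ ∪ L₂))
  | glue {L₁ L₂ : Set (Ipomset Λ)} : Rational L₁ → Rational L₂ →
      Rational (downc {R | ∃ P ∈ L₁, ∃ Q ∈ L₂, IsGluing P Q R})
  | plus {L : Set (Ipomset Λ)} : Rational L →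
      Rational (downc {R | ∃ l : List (Ipomset Λ), l ≠ [] ∧ (∀ Q ∈ l, Q ∈ L) ∧ IsGluingList l R})

/-! ## MSO over ipomsets -/

/-- MSO formulas over the signature `{<, ⇝, (a)_{a ∈ Λ}, s, t}`; first- and second-order
variables are indexed by ℕ. -/
inductive MSO (Λ : Type) : Type
  | lt : ℕ → ℕ → MSO Λ
  | ev : ℕ → ℕ → MSO Λ
  | lab : Λ → ℕ → MSO Λ
  | src : ℕ → MSO Λ
  | tgt : ℕ → MSO Λ
  | mem : ℕ → ℕ → MSO Λ
  | not : MSO Λ → MSO Λ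
  | and : MSO Λ → MSO Λ → MSO Λ
  | exFO : ℕ → MSO Λ → MSO Λ
  | exSO : ℕ → MSO Λ → MSO Λ

namespace MSO

variable {Λ : Type}

/-- Satisfaction of an MSO formula in an ipomset, under first- and second-order
valuations. -/
def Sat (P : Ipomset Λ) : MSO Λ → (ℕ → ℕ) → (ℕ → Set ℕ) → Prop
  | .lt x y, ν, _ => P.lt (ν x) (ν y)
  | .ev x y, ν, _ => P.evord (ν x) (ν y)
  | .lab a x, ν, _ => ν x ∈ P.E ∧ P.lab (ν x) = a
  | .src x, ν, _ => ν x ∈ P.S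
  | .tgt x, ν, _ => ν x ∈ P.T
  | .mem x X, ν, μ => ν x ∈ μ X
  | .not φ, ν, μ => ¬ Sat P φ ν μ
  | .and φ ψ, ν, μ => Sat P φ ν μ ∧ Sat P ψ ν μ
  | .exFO x φ, ν, μ => ∃ e ∈ P.E, Sat P φ (Function.update ν x e) μ
  | .exSO X φ, ν, μ => ∃ A : Set ℕ, A ⊆ ↑P.E ∧ Sat P φ ν (Function.update μ X A)

/-- Free first-order variables. -/
def fv1 : MSO Λ → Finset ℕ
  | .lt x y => {x, y}
  | .ev x y => {x, y}
  | .lab _ x => {x}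
  | .src x => {x}
  | .tgt x => {x}
  | .mem x _ => {x}
  | .not φ => fv1 φ
  | .and φ ψ => fv1 φ ∪ fv1 ψ
  | .exFO x φ => fv1 φ \ {x}
  | .exSO _ φ => fv1 φ

/-- Free second-order variables. -/
def fv2 : MSO Λ → Finset ℕ
  | .mem _ X => {X}
  | .not φ => fv2 φ
  | .and φ ψ => fv2 φ ∪ fv2 ψ
  | .exFO _ φ => fv2 φ
  | .exSO X φ => fv2 φ \ {X}
  | _ => ∅

/-- A sentence: a formula with no free variables. -/
def Closed (φ : MSO Λ) : Prop := φ.fv1 = ∅ ∧ φ.fv2 = ∅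

/-- Satisfaction of a sentence. -/
def Models (P : Ipomset Λ) (φ : MSO Λ) : Prop :=
  Sat P φ (fun _ => 0) (fun _ => ∅)

end MSO

/-- A set of interval ipomsets is MSO-definable if it is the set of interval ipomsets
satisfying some MSO sentence. -/
def MSODefinable {Λ : Type} (L : Set (Ipomset Λ)) : Prop :=
  ∃ φ : MSO Λ, φ.Closed ∧ L = {P | P.Interval ∧ MSO.Models P φ}

/-! ## MSO over words -/

/-- MSO formulas over words on the alphabet `Γ`. -/
inductive WMSO (Γ : Type) : Type
  | letter : Γ → ℕ → WMSO Γ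
  | lt : ℕ → ℕ → WMSO Γ
  | mem : ℕ → ℕ → WMSO Γ
  | not : WMSO Γ → WMSO Γ
  | and : WMSO Γ → WMSO Γ → WMSO Γ
  | exFO : ℕ → WMSO Γ → WMSO Γ
  | exSO : ℕ → WMSO Γ → WMSO Γ

namespace WMSO

variable {Γ : Type}

/-- Satisfaction of a word MSO formula in a word `w : List Γ`. -/
def Sat (w : List Γ) : WMSO Γ → (ℕ → ℕ) → (ℕ → Set ℕ) → Prop
  | .letter a x, ν, _ => w[ν x]? = some a
  | .lt x y, ν, _ => ν x < ν y
  | .mem x X, ν, μ => ν x ∈ μ X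
  | .not φ, ν, μ => ¬ Sat w φ ν μ
  | .and φ ψ, ν, μ => Sat w φ ν μ ∧ Sat w ψ ν μ
  | .exFO x φ, ν, μ => ∃ i < w.length, Sat w φ (Function.update ν x i) μ
  | .exSO X φ, ν, μ => ∃ A : Set ℕ, A ⊆ Set.Iio w.length ∧ Sat w φ ν (Function.update μ X A)

def fv1 : WMSO Γ → Finset ℕ
  | .letter _ x => {x}
  | .lt x y => {x, y}
  | .mem x _ => {x}
  | .not φ => fv1 φ
  | .and φ ψ => fv1 φ ∪ fv1 ψ
  | .exFO x φ => fv1 φ \ {x}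
  | .exSO _ φ => fv1 φ

def fv2 : WMSO Γ → Finset ℕ
  | .mem _ X => {X}
  | .not φ => fv2 φ
  | .and φ ψ => fv2 φ ∪ fv2 ψ
  | .exFO _ φ => fv2 φ
  | .exSO X φ => fv2 φ \ {X}
  | _ => ∅

def Closed (φ : WMSO Γ) : Prop := φ.fv1 = ∅ ∧ φ.fv2 = ∅

def Models (w : List Γ) (φ : WMSO Γ) : Prop :=
  Sat w φ (fun _ => 0) (fun _ => ∅)

end WMSO

/-! ## Step indices in a step decomposition -/

/-- The (1-indexed) step at which event `e` is started in the decomposition `l` of `P`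
(`⊥ = −∞` for source events). -/
noncomputable def StIdx {Λ : Type} (P : Ipomset Λ) (l : List (Ipomset Λ)) (e : ℕ) : EReal :=
  if e ∈ P.S then ⊥
  else sInf {x : EReal | ∃ ℓ : Fin l.length, e ∈ (l.get ℓ).E ∧ x = ((ℓ : ℕ) : EReal) + 1}

/-- The (1-indexed) step at which event `e` is terminated in the decomposition `l` of `P`
(`⊤ = +∞` for target events). -/
noncomputable def TeIdx {Λ : Type} (P : Ipomset Λ) (l : List (Ipomset Λ)) (e : ℕ) : EReal :=
  if e ∈ P.T then ⊤
  else sSup {x : EReal | ∃ ℓ : Fin l.length, e ∈ (l.get ℓ).E ∧ x = ((ℓ : ℕ) : EReal) + 1}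

/-- Select `St` (`true`) or `Te` (`false`). -/
noncomputable def selIdx {Λ : Type} (P : Ipomset Λ) (l : List (Ipomset Λ)) (f : Bool)
    (e : ℕ) : EReal :=
  if f then StIdx P l e else TeIdx P l e

/-- Any `<`-antichain of a gluing of a list lies inside the events of a single element
of the list. -/
lemma antichain_in_step {Λ : Type} {l : List (Ipomset Λ)} {P : Ipomset Λ}
    (hg : IsGluingList l P) :
    ∀ A : Finset ℕ, A ⊆ P.E → (∀ a ∈ A, ∀ b ∈ A, ¬ P.lt a b) →
      ∃ D ∈ l, A ⊆ D.E := by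
  induction hg with
  | single P =>
    intro A hA _
    exact ⟨P, List.mem_singleton_self _, hA⟩
  | @cons P Q R l hg hglue ih =>
    intro A hA hanti
    by_cases hcase : ∀ a ∈ A, a ∈ P.E
    · exact ⟨P, List.mem_cons_self, hcase⟩
    · push_neg at hcase
      obtain ⟨b, hbA, hbP⟩ := hcase
      have hbQ : b ∈ Q.E := by
        have h := hA hbA
        rw [hglue.E_eq] at h
        rcases Finset.mem_union.mp h with h | h
        · exact absurd h hbP
        · exact h
      have hbS : b ∉ Q.S := fun h => hbP (P.T_sub (hglue.match_TS ▸ h))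
      have hAQ : ∀ a ∈ A, a ∈ Q.E := by
        intro a haA
        by_contra haQ
        have haP : a ∈ P.E := by
          have h := hA haA
          rw [hglue.E_eq] at h
          rcases Finset.mem_union.mp h with h | h
          · exact h
          · exact absurd h haQ
        have haT : a ∉ P.T := fun h => haQ (Q.S_sub (hglue.match_TS ▸ h))
        exact hanti a haA b hbA ((hglue.lt_eq a b).mpr
          (Relation.TransGen.single (Or.inr (Or.inr ⟨haP, haT, hbQ, hbS⟩))))
      have hantiQ : ∀ a ∈ A, ∀ c ∈ A, ¬ Q.lt a c := by
        intro a ha c hc hlt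
        exact hanti a ha c hc ((hglue.lt_eq a c).mpr
          (Relation.TransGen.single (Or.inr (Or.inl hlt))))
      obtain ⟨D, hD, hAD⟩ := ih A (fun a ha => hAQ a ha) hantiQ
      exact ⟨D, List.mem_cons_of_mem _ hD, hAD⟩

/-- Every letter along a path has conclist `H.ev c` for some cell `c`. -/
lemma path_letters {Λ : Type} {H : HDA Λ} {q p : H.Cell} {w : List (StepLetter Λ)}
    (hp : H.Path q p w) : ∀ s ∈ w, ∃ c : H.Cell, s.U = H.ev c := by
  induction hp with
  | nil q =>
    intro s hs
    rw [List.mem_singleton] at hs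
    exact ⟨q, by rw [hs]⟩
  | up r A hA _ ih =>
    intro s hs
    rcases List.mem_cons.mp hs with h | h
    · exact ⟨r, by rw [h]⟩
    · exact ih s h
  | down q' A hA _ ih =>
    intro s hs
    rcases List.mem_cons.mp hs with h | h
    · exact ⟨q', by rw [h]⟩
    · exact ih s h

/-- A discrete ipomset matching a letter has exactly `s.U.length` events. -/
lemma letter_card {Λ : Type} {s : StepLetter Λ} {D : Ipomset Λ}
    (h : LetterMatches s D) : D.E.card = s.U.length := by
  obtain ⟨-, g, ⟨hbij, -, -⟩, -⟩ := h
  have h1 : (↑D.E : Set ℕ) = g '' Set.Iio s.U.length := hbij.image_eq.symm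
  have h2 : (↑D.E : Set ℕ).ncard = (Set.Iio s.U.length).ncard := by
    rw [h1, Set.ncard_image_of_injOn hbij.injOn]
  rw [Set.ncard_coe_finset] at h2
  rw [h2, ← Finset.coe_range, Set.ncard_coe_finset, Finset.card_range]

lemma forall₂_mem_right {α β : Type} {R : α → β → Prop} {l₁ : List α} {l₂ : List β}
    (h : List.Forall₂ R l₁ l₂) {b : β} (hb : b ∈ l₂) : ∃ a ∈ l₁, R a b := by
  induction h with
  | nil => simp at hb
  | cons hr _ ih =>
    rcases List.mem_cons.mp hb with rfl | hb'
    · exact ⟨_, List.mem_cons_self, hr⟩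
    · obtain ⟨a, ha, hra⟩ := ih hb'
      exact ⟨a, List.mem_cons_of_mem _ ha, hra⟩

/-- Any regular language has finite width, bounded by the dimension of
any HDA recognising it. -/
theorem regular_finite_width {Λ : Type} [Fintype Λ] (H : HDA Λ) :
    ∀ P ∈ H.Lang, P.width ≤ H.dim := by
  intro P hP
  obtain ⟨q, p, w, hq, hp, hpath, l, hf2, hglue⟩ := hP
  apply csSup_le'
  rintro n ⟨A, hAE, hanti, rfl⟩
  obtain ⟨D, hD, hAD⟩ := antichain_in_step hglue A hAE hanti
  obtain ⟨s, hsw, hm⟩ := forall₂_mem_right hf2 hD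
  obtain ⟨c, hc⟩ := path_letters hpath s hsw
  calc A.card ≤ D.E.card := Finset.card_le_card hAD
    _ = s.U.length := letter_card hm
    _ = (H.ev c).length := by rw [hc]
    _ ≤ H.dim := by
        letI := H.fin
        exact Finset.le_sup (f := fun q => (H.ev q).length) (Finset.mem_univ c)
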